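/- (Algebraic version of the uniform-ellipticity lemma of Section 6.) Let n ≥ 2, 2 ≤ k ≤ n and 0 ≤ l₀ ≤ k−2. For every C > 0 there exists c > 0, depending only on n, k, l₀ and C, such that every λ ∈ Γ_{k-1} satisfying σ_{l₀}(λ) ≤ C · σ_{k-1}(λ) also satisfies σ_{k-1}(λ) ≥ c. -/

import Mathlib

/-- The `k`-th elementary symmetric function of a vector `lam ∈ ℝⁿ`. -/
noncomputable def esymm (n k : ℕ) (lam : Fin n → ℝ) : ℝ :=
  ∑ s ∈ Finset.powersetCard k (Finset.univ : Finset (Fin n)), ∏ i ∈ s, lam i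

/-- The Gårding cone `Γ_k = {λ ∈ ℝⁿ : σ_j(λ) > 0 for all 1 ≤ j ≤ k}`. -/
def GammaCone (n k : ℕ) : Set (Fin n → ℝ) :=
  {lam | ∀ j : ℕ, 1 ≤ j → j ≤ k → 0 < esymm n j lam}


section NewtonSection
open Multiset Polynomial

namespace NewtonAux

lemma esymm_cons (a : ℝ) (s : Multiset ℝ) (k : ℕ) :
    (a ::ₘ s).esymm (k + 1) = s.esymm (k + 1) + a * s.esymm k := by
  simp only [Multiset.esymm, powersetCard_cons, Multiset.map_add, Multiset.sum_add,
    Multiset.map_map]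
  congr 1
  rw [← Multiset.sum_map_mul_left]
  exact congrArg _ (Multiset.map_congr rfl fun t _ => by simp)

lemma powersetCard_self (s : Multiset ℝ) : s.powersetCard (card s) = {s} := by
  have hcard : card (s.powersetCard (card s)) = 1 := by
    simp [Nat.choose_self]
  obtain ⟨t, ht⟩ := Multiset.card_eq_one.1 hcard
  have hs : s ∈ s.powersetCard (card s) := by
    simp [Multiset.mem_powersetCard]
  rw [ht] at hs ⊢
  simp only [Multiset.mem_singleton] at hs
  rw [hs]

lemma esymm_card (s : Multiset ℝ) : s.esymm (card s) = s.prod := by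
  simp [Multiset.esymm, powersetCard_self]

/-- The leave-one-out square identity:
`σ_{n-1}(s)² = Σ_i (∏_{j≠i} λ_j)² + 2 σ_{n-2}(s) σ_n(s)`. -/
lemma loo_sq (s : Multiset ℝ) (m : ℕ) (h : card s = m + 2) :
    s.esymm (m + 1) ^ 2 =
      (((s.powersetCard (m + 1)).map Multiset.prod).map (· ^ 2)).sum
        + 2 * s.esymm m * s.prod := by
  induction s using Multiset.induction generalizing m with
  | empty => simp at h
  | cons a t ih =>
    rw [Multiset.card_cons] at h
    have ht : card t = m + 1 := by omega
    cases m with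
    | zero =>
      obtain ⟨b, rfl⟩ := Multiset.card_eq_one.1 ht
      simp [Multiset.esymm, Multiset.powersetCard_cons, Multiset.powersetCard_one]
      ring
    | succ m' =>
      have htc : card t = m' + 2 := by omega
      have hps : t.powersetCard (m' + 2) = {t} := by
        rw [← htc]; exact powersetCard_self t
      have hD : ((a ::ₘ t).powersetCard (m' + 2)).map Multiset.prod
          = t.prod ::ₘ ((t.powersetCard (m' + 1)).map Multiset.prod).map (a * ·) := by
        rw [Multiset.powersetCard_cons, hps, Multiset.map_add, Multiset.map_map,
          Multiset.map_map]
        simp [Function.comp_def]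
      have hQ : ((((a ::ₘ t).powersetCard (m' + 2)).map Multiset.prod).map (· ^ 2)).sum
          = t.prod ^ 2 + a ^ 2 *
            ((((t.powersetCard (m' + 1)).map Multiset.prod).map (· ^ 2)).sum) := by
        rw [hD, Multiset.map_cons, Multiset.sum_cons, Multiset.map_map, Multiset.map_map]
        congr 1
        rw [← Multiset.sum_map_mul_left, Multiset.map_map]
        refine congrArg _ (Multiset.map_congr rfl fun x _ => ?_)
        simp [Function.comp_def]; ring
      have e1 : (a ::ₘ t).esymm (m' + 2) = t.prod + a * t.esymm (m' + 1) := by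
        rw [esymm_cons]
        congr 1
        rw [← htc, esymm_card]
      have e2 : (a ::ₘ t).esymm (m' + 1) = t.esymm (m' + 1) + a * t.esymm m' := esymm_cons _ _ _
      have e3 : (a ::ₘ t).prod = a * t.prod := Multiset.prod_cons _ _
      rw [hQ, e1, e2, e3]
      have := ih m' htc
      linear_combination this * a ^ 2

end NewtonAux

namespace NewtonAux2
open NewtonAux

/-- Cauchy-Schwarz for multisets. -/
lemma sq_sum_le_card_mul_sum_sq (s : Multiset ℝ) :
    s.sum ^ 2 ≤ (card s : ℝ) * (s.map (· ^ 2)).sum := by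
  induction s using Multiset.induction with
  | empty => simp
  | cons a s ih =>
    simp only [Multiset.sum_cons, Multiset.card_cons, Multiset.map_cons, Nat.cast_add,
      Nat.cast_one]
    have h4 : (0 : ℝ) ≤ (s.map (· ^ 2)).sum := by
      refine Multiset.sum_nonneg ?_
      intro x hx
      obtain ⟨y, _, rfl⟩ := Multiset.mem_map.1 hx
      positivity
    rcases Nat.eq_zero_or_pos (card s) with h | h
    · have : s = 0 := Multiset.card_eq_zero.1 h
      subst this; simp
    · have hc : (1 : ℝ) ≤ (card s : ℝ) := by exact_mod_cast h
      nlinarith [sq_nonneg ((card s : ℝ) * a - s.sum)]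

/-- Newton's inequality, top case `j = n - 1`. -/
lemma newton_top (s : Multiset ℝ) (m : ℕ) (h : card s = m + 2) :
    ((m + 2 : ℕ) : ℝ) ^ 2 * (s.esymm m * s.esymm (m + 2)) ≤
      (((m + 2).choose 2 : ℕ) : ℝ) * s.esymm (m + 1) ^ 2 := by
  set D : Multiset ℝ := (s.powersetCard (m + 1)).map Multiset.prod with hDdef
  have hsum : D.sum = s.esymm (m + 1) := rfl
  have hcard : card D = m + 2 := by
    rw [hDdef, Multiset.card_map, Multiset.card_powersetCard, h, Nat.choose_succ_self_right]
  have hcs : s.esymm (m + 1) ^ 2 ≤ ((m + 2 : ℕ) : ℝ) * (D.map (· ^ 2)).sum := by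
    rw [← hsum, ← hcard]
    exact sq_sum_le_card_mul_sum_sq D
  have hid := loo_sq s m h
  have hprod : s.esymm (m + 2) = s.prod := by rw [← h, esymm_card]
  have hch : (((m + 2).choose 2 : ℕ) : ℝ) * 2 = ((m + 2 : ℕ) : ℝ) * ((m + 1 : ℕ) : ℝ) := by
    rw [Nat.cast_choose_two]
    push_cast
    ring
  rw [hprod]
  push_cast at hch hcs ⊢
  nlinarith [hcs, hid, sq_nonneg (s.esymm (m + 1))]
end NewtonAux2

namespace NewtonAux3
open NewtonAux NewtonAux2

/-- The derivative step: from a multiset `s` of reals of size `m+1`, produce a multiset `u`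
of size `m` (the roots of the derivative, negated) with
`(m+1) σ_i(u) = (m+1-i) σ_i(s)` for all `i ≤ m`. -/
lemma deriv_step (s : Multiset ℝ) (m : ℕ) (h : card s = m + 1) :
    ∃ u : Multiset ℝ, card u = m ∧
      ∀ i ≤ m, ((m + 1 : ℕ) : ℝ) * u.esymm i = ((m + 1 - i : ℕ) : ℝ) * s.esymm i := by
  set f : Polynomial ℝ := (s.map fun a => Polynomial.X + Polynomial.C a).prod with hfdef
  have hmonic : f.Monic :=
    Polynomial.monic_multiset_prod_of_monic _ _ fun a _ => Polynomial.monic_X_add_C a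
  have hdeg : f.natDegree = m + 1 := by
    rw [hfdef, Polynomial.natDegree_multiset_prod_of_monic _
      (fun p hp => by
        obtain ⟨a, _, rfl⟩ := Multiset.mem_map.1 hp
        exact Polynomial.monic_X_add_C a)]
    rw [Multiset.map_map]
    have : (s.map fun a => ((Polynomial.X + Polynomial.C a).natDegree)) = s.map fun _ => 1 :=
      Multiset.map_congr rfl fun a _ => Polynomial.natDegree_X_add_C a
    rw [Function.comp_def, this]
    simp [h]
    omega
  have hfr : f = ((s.map Neg.neg).map fun a => Polynomial.X - Polynomial.C a).prod := by
    rw [hfdef, Multiset.map_map]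
    exact congrArg _ (Multiset.map_congr rfl fun a _ => by simp)
  have hroots : f.roots = s.map Neg.neg := by
    rw [hfr, Polynomial.roots_multiset_prod_X_sub_C]
  have hcroots : Multiset.card f.roots = m + 1 := by rw [hroots, Multiset.card_map, h]
  set g := Polynomial.derivative f with hgdef
  have hgle : g.natDegree ≤ m := by
    rw [hgdef]
    have := Polynomial.natDegree_derivative_le f
    omega
  have hgroots_ge : m ≤ Multiset.card g.roots := by
    rw [hgdef]
    have := Polynomial.card_roots_le_derivative f
    omega
  have hgroots_le : Multiset.card g.roots ≤ g.natDegree := Polynomial.card_roots' g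
  have hgdeg : g.natDegree = m := le_antisymm hgle (le_trans hgroots_ge hgroots_le)
  have hgcard : Multiset.card g.roots = m := le_antisymm (hgdeg ▸ hgroots_le) hgroots_ge
  have hlc : g.leadingCoeff = (m + 1 : ℝ) := by
    rw [Polynomial.leadingCoeff, hgdeg, hgdef, Polynomial.coeff_derivative, ← hdeg,
      hmonic.coeff_natDegree]
    push_cast
    ring
  have hrec : Polynomial.C g.leadingCoeff *
      (g.roots.map fun a => Polynomial.X - Polynomial.C a).prod = g :=
    Polynomial.C_leadingCoeff_mul_prod_multiset_X_sub_C (hgcard.trans hgdeg.symm)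
  refine ⟨g.roots.map Neg.neg, by rw [Multiset.card_map, hgcard], fun i hi => ?_⟩
  set u := g.roots.map Neg.neg with hudef
  have hucard : Multiset.card u = m := by rw [hudef, Multiset.card_map, hgcard]
  have hgu : (g.roots.map fun a => Polynomial.X - Polynomial.C a).prod
      = (u.map fun a => Polynomial.X + Polynomial.C a).prod := by
    rw [hudef, Multiset.map_map]
    refine congrArg _ (Multiset.map_congr rfl fun a _ => ?_)
    simp only [Function.comp_apply, map_neg, ← sub_eq_add_neg]
  -- coefficient of degree m - i in g, two ways
  have way1 : g.coeff (m - i) = s.esymm i * ((m - i + 1 : ℕ) : ℝ) := by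
    rw [hgdef, Polynomial.coeff_derivative, hfdef]
    have hle : m - i + 1 ≤ Multiset.card s := by omega
    rw [Multiset.prod_X_add_C_coeff s hle]
    have : Multiset.card s - (m - i + 1) = i := by omega
    rw [this]
    push_cast
    ring
  have way2 : g.coeff (m - i) = ((m + 1 : ℕ) : ℝ) * u.esymm i := by
    conv_lhs => rw [← hrec]
    rw [hgu, Polynomial.coeff_C_mul, hlc]
    have hle : m - i ≤ Multiset.card u := by omega
    rw [Multiset.prod_X_add_C_coeff u hle]
    have : Multiset.card u - (m - i) = i := by omega
    rw [this]
    push_cast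
    ring
  rw [← way2, way1]
  have : m + 1 - i = m - i + 1 := by omega
  rw [this]
  ring
end NewtonAux3

namespace NewtonAux4
open NewtonAux NewtonAux2 NewtonAux3

lemma chooseId (m i : ℕ) : (m + 1 - i) * (m + 1).choose i = (m + 1) * m.choose i := by
  have h1 := Nat.choose_succ_right_eq (m + 1) i
  have h2 := Nat.add_one_mul_choose_eq m i
  rw [mul_comm, ← h1, h2]

lemma newton_aux : ∀ n : ℕ, ∀ s : Multiset ℝ, card s = n → ∀ j : ℕ, j + 1 < n →
    ((n.choose (j + 1) : ℕ) : ℝ) ^ 2 * (s.esymm j * s.esymm (j + 2)) ≤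
      ((n.choose j : ℕ) : ℝ) * ((n.choose (j + 2) : ℕ) : ℝ) * s.esymm (j + 1) ^ 2 := by
  intro n
  induction n using Nat.strong_induction_on with
  | _ n ih =>
    intro s hs j hj
    rcases eq_or_lt_of_le (Nat.succ_le_of_lt hj) with htop | hlt
    · -- top case : n = j + 2
      have hn : n = j + 2 := htop.symm
      subst hn
      have h1 : (j + 2).choose (j + 1) = j + 2 := Nat.choose_succ_self_right (j + 1)
      have h2 : (j + 2).choose (j + 2) = 1 := Nat.choose_self _
      have h3 : (j + 2).choose j = (j + 2).choose 2 := by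
        have := Nat.choose_symm (show 2 ≤ j + 2 by omega) (n := j + 2)
        simpa using this
      rw [h1, h2, h3]
      have := newton_top s j hs
      push_cast at this ⊢
      nlinarith [this]
    · -- inductive case : j + 2 < n
      obtain ⟨m, rfl⟩ : ∃ m, n = m + 1 := ⟨n - 1, by omega⟩
      obtain ⟨u, hucard, hrel⟩ := deriv_step s m hs
      have hjm : j + 1 < m := by omega
      have IH := ih m (by omega) u hucard j hjm
      set N : ℝ := ((m + 1 : ℕ) : ℝ) with hNdef
      have hN : (0 : ℝ) < N := by rw [hNdef]; positivity
      set α : ℝ := ((m + 1 - (j + 2) : ℕ) : ℝ) with hαdef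
      have hα : (1 : ℝ) ≤ α := by
        rw [hαdef]
        exact_mod_cast Nat.one_le_iff_ne_zero.2 (by omega)
      have hcast1 : ((m + 1 - (j + 1) : ℕ) : ℝ) = α + 1 := by
        have e : m + 1 - (j + 1) = (m + 1 - (j + 2)) + 1 := by omega
        rw [e, Nat.cast_add, Nat.cast_one, hαdef]
      have hcast0 : ((m + 1 - j : ℕ) : ℝ) = α + 2 := by
        have e : m + 1 - j = (m + 1 - (j + 2)) + 2 := by omega
        rw [e, Nat.cast_add, Nat.cast_ofNat, hαdef]
      -- relations between esymm of u and s
      have r0 := hrel j (by omega)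
      have r1 := hrel (j + 1) (by omega)
      have r2 := hrel (j + 2) (by omega)
      rw [hcast0] at r0
      rw [hcast1] at r1
      -- choose relations
      have c0 : N * ((m.choose j : ℕ) : ℝ) = (α + 2) * (((m + 1).choose j : ℕ) : ℝ) := by
        rw [← hcast0, hNdef]
        exact_mod_cast (chooseId m j).symm
      have c1 : N * ((m.choose (j + 1) : ℕ) : ℝ)
          = (α + 1) * (((m + 1).choose (j + 1) : ℕ) : ℝ) := by
        rw [← hcast1, hNdef]
        exact_mod_cast (chooseId m (j + 1)).symm
      have c2 : N * ((m.choose (j + 2) : ℕ) : ℝ)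
          = α * (((m + 1).choose (j + 2) : ℕ) : ℝ) := by
        rw [hαdef, hNdef]
        exact_mod_cast (chooseId m (j + 2)).symm
      have h0 : (0 : ℝ) < α := by linarith
      have hK : (0 : ℝ) < α * (α + 1) ^ 2 * (α + 2) := by
        have := mul_pos (mul_pos h0 (pow_pos (by linarith : (0 : ℝ) < α + 1) 2))
          (by linarith : (0 : ℝ) < α + 2)
        exact this
      have L : N ^ 4 * (((m.choose (j + 1) : ℕ) : ℝ) ^ 2 * (u.esymm j * u.esymm (j + 2)))
          = (α * (α + 1) ^ 2 * (α + 2)) *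
            ((((m + 1).choose (j + 1) : ℕ) : ℝ) ^ 2 * (s.esymm j * s.esymm (j + 2))) := by
        calc N ^ 4 * (((m.choose (j + 1) : ℕ) : ℝ) ^ 2 * (u.esymm j * u.esymm (j + 2)))
            = (N * ((m.choose (j + 1) : ℕ) : ℝ)) ^ 2
                * ((N * u.esymm j) * (N * u.esymm (j + 2))) := by ring
          _ = ((α + 1) * (((m + 1).choose (j + 1) : ℕ) : ℝ)) ^ 2
                * (((α + 2) * s.esymm j) * (α * s.esymm (j + 2))) := by rw [c1, r0, r2]
          _ = (α * (α + 1) ^ 2 * (α + 2)) *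
              ((((m + 1).choose (j + 1) : ℕ) : ℝ) ^ 2 * (s.esymm j * s.esymm (j + 2))) := by
            ring
      have R : N ^ 4 * (((m.choose j : ℕ) : ℝ) * ((m.choose (j + 2) : ℕ) : ℝ)
              * u.esymm (j + 1) ^ 2)
          = (α * (α + 1) ^ 2 * (α + 2)) *
            ((((m + 1).choose j : ℕ) : ℝ) * (((m + 1).choose (j + 2) : ℕ) : ℝ)
              * s.esymm (j + 1) ^ 2) := by
        calc N ^ 4 * (((m.choose j : ℕ) : ℝ) * ((m.choose (j + 2) : ℕ) : ℝ)
                * u.esymm (j + 1) ^ 2)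
            = (N * ((m.choose j : ℕ) : ℝ)) * (N * ((m.choose (j + 2) : ℕ) : ℝ))
                * (N * u.esymm (j + 1)) ^ 2 := by ring
          _ = ((α + 2) * (((m + 1).choose j : ℕ) : ℝ))
                * (α * (((m + 1).choose (j + 2) : ℕ) : ℝ))
                * ((α + 1) * s.esymm (j + 1)) ^ 2 := by rw [c0, c2, r1]
          _ = (α * (α + 1) ^ 2 * (α + 2)) *
              ((((m + 1).choose j : ℕ) : ℝ) * (((m + 1).choose (j + 2) : ℕ) : ℝ)
                * s.esymm (j + 1) ^ 2) := by ring
      have step : (α * (α + 1) ^ 2 * (α + 2)) *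
            ((((m + 1).choose (j + 1) : ℕ) : ℝ) ^ 2 * (s.esymm j * s.esymm (j + 2)))
          ≤ (α * (α + 1) ^ 2 * (α + 2)) *
            ((((m + 1).choose j : ℕ) : ℝ) * (((m + 1).choose (j + 2) : ℕ) : ℝ)
              * s.esymm (j + 1) ^ 2) := by
        rw [← L, ← R]
        exact mul_le_mul_of_nonneg_left IH (by positivity)
      exact (mul_le_mul_iff_right₀ hK).mp step

/-- Newton's inequality for real multisets. -/
theorem newton_ineq (s : Multiset ℝ) (j : ℕ) (hjn : j + 1 < Multiset.card s) :
    (((Multiset.card s).choose (j + 1) : ℕ) : ℝ) ^ 2 * (s.esymm j * s.esymm (j + 2)) ≤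
      (((Multiset.card s).choose j : ℕ) : ℝ) * (((Multiset.card s).choose (j + 2) : ℕ) : ℝ) *
        s.esymm (j + 1) ^ 2 :=
  newton_aux (Multiset.card s) s rfl j hjn
end NewtonAux4

end NewtonSection

namespace MacAux

/-- Maclaurin-type inequality from Newton's inequalities, abstract form. -/
lemma maclaurin_abs (p : ℕ → ℝ) (K : ℕ) (hp0 : p 0 = 1)
    (hpos : ∀ i ≤ K, 0 < p i)
    (hnewt : ∀ i, i + 2 ≤ K → p i * p (i + 2) ≤ p (i + 1) ^ 2) :
    ∀ l ≤ K, p K ^ l ≤ p l ^ K := by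
  set r : ℕ → ℝ := fun i => p (i + 1) / p i with hr
  have hrpos : ∀ i, i + 1 ≤ K → 0 < r i := fun i hi =>
    div_pos (hpos _ hi) (hpos _ (by omega))
  have hrstep : ∀ i, i + 2 ≤ K → r (i + 1) ≤ r i := by
    intro i hi
    rw [hr]
    simp only
    rw [div_le_div_iff₀ (hpos _ (by omega)) (hpos _ (by omega))]
    nlinarith [hnewt i hi]
  have hranti : ∀ i j, i ≤ j → j + 1 ≤ K → r j ≤ r i := by
    intro i j hij
    induction j, hij using Nat.le_induction with
    | base => intro _; exact le_refl _
    | succ j hij ihj =>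
      intro hjK
      exact le_trans (hrstep j hjK) (ihj (by omega))
  have htel : ∀ m, m ≤ K → p m = ∏ i ∈ Finset.range m, r i := by
    intro m
    induction m with
    | zero => intro _; simpa using hp0
    | succ m ihm =>
      intro hm
      rw [Finset.prod_range_succ, ← ihm (by omega), hr]
      simp only
      rw [mul_div_cancel₀ _ (ne_of_gt (hpos m (by omega)))]
  intro l hlK
  rcases eq_or_lt_of_le hlK with rfl | hl
  · exact le_refl _
  set P : ℝ := ∏ i ∈ Finset.range l, r i with hP
  have hPeq : P = p l := (htel l (by omega)).symm
  have hPpos : 0 < P := hPeq ▸ hpos l (by omega)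
  set Q : ℝ := ∏ i ∈ Finset.Ico l K, r i with hQ
  have hQnonneg : 0 ≤ Q :=
    Finset.prod_nonneg fun i hi => le_of_lt (hrpos i (by
      have := (Finset.mem_Ico.1 hi).2; omega))
  have hsplit : p K = P * Q := by
    rw [htel K le_rfl, hP, hQ, Finset.range_eq_Ico, ← Finset.prod_Ico_consecutive _
      (Nat.zero_le l) (le_of_lt hl), Finset.range_eq_Ico]
  have hQbound : Q ≤ r l ^ (K - l) := by
    have h1 : Q ≤ ∏ _i ∈ Finset.Ico l K, r l := by
      refine Finset.prod_le_prod (fun i hi => le_of_lt (hrpos i (by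
        have := (Finset.mem_Ico.1 hi).2; omega))) (fun i hi => ?_)
      obtain ⟨hi1, hi2⟩ := Finset.mem_Ico.1 hi
      exact hranti l i hi1 (by omega)
    rwa [Finset.prod_const, Nat.card_Ico] at h1
  have hrlP : r l ^ l ≤ P := by
    have h1 : ∏ _i ∈ Finset.range l, r l ≤ P := by
      refine Finset.prod_le_prod (fun i _ => le_of_lt (hrpos l (by omega))) (fun i hi => ?_)
      exact hranti i l (le_of_lt (Finset.mem_range.1 hi)) (by omega)
    rwa [Finset.prod_const, Finset.card_range] at h1
  have hrl_nonneg : 0 ≤ r l := le_of_lt (hrpos l (by omega))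
  calc p K ^ l = P ^ l * Q ^ l := by rw [hsplit, mul_pow]
    _ ≤ P ^ l * (r l ^ (K - l)) ^ l :=
        mul_le_mul_of_nonneg_left (pow_le_pow_left₀ hQnonneg hQbound l) (by positivity)
    _ = P ^ l * (r l ^ l) ^ (K - l) := by rw [← pow_mul, ← pow_mul, Nat.mul_comm]
    _ ≤ P ^ l * P ^ (K - l) :=
        mul_le_mul_of_nonneg_left (pow_le_pow_left₀ (by positivity) hrlP (K - l)) (by positivity)
    _ = P ^ K := by rw [← pow_add]; congr 1; omega
    _ = p l ^ K := by rw [hPeq]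

end MacAux

lemma esymm_bridge (n j : ℕ) (lam : Fin n → ℝ) :
    (Multiset.map lam (Finset.univ.val : Multiset (Fin n))).esymm j = esymm n j lam := by
  unfold esymm
  exact Finset.esymm_map_val lam Finset.univ j

/-- Algebraic version of the uniform-ellipticity lemma of Section 6: for any
`C > 0` there is `c > 0`, depending only on `n, k, l₀, C`, such that every
`λ ∈ Γ_{k-1}` with `σ_{l₀}(λ) ≤ C σ_{k-1}(λ)` satisfies `σ_{k-1}(λ) ≥ c`. -/
theorem sigma_km1_lower_bound (n k l0 : ℕ) (hn : 2 ≤ n) (hk : 2 ≤ k) (hkn : k ≤ n)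
    (hl0 : l0 ≤ k - 2) :
    ∀ C > (0 : ℝ), ∃ c > (0 : ℝ), ∀ lam ∈ GammaCone n (k - 1),
      esymm n l0 lam ≤ C * esymm n (k - 1) lam →
      c ≤ esymm n (k - 1) lam := by
  intro C hC
  have hBl0 : (0 : ℝ) < (n.choose l0 : ℝ) := by
    exact_mod_cast Nat.choose_pos (show l0 ≤ n by omega)
  have hBK : (0 : ℝ) < (n.choose (k - 1) : ℝ) := by
    exact_mod_cast Nat.choose_pos (show k - 1 ≤ n by omega)
  set C2 : ℝ := C * (n.choose (k - 1) : ℝ) / (n.choose l0 : ℝ) with hC2def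
  have hC2pos : 0 < C2 := div_pos (mul_pos hC hBK) hBl0
  set ε : ℝ := 1 / C2 ^ (k - 1) with hεdef
  have hεpos : 0 < ε := by
    rw [hεdef]
    exact one_div_pos.mpr (pow_pos hC2pos _)
  refine ⟨(n.choose (k - 1) : ℝ) * min 1 ε, mul_pos hBK (lt_min one_pos hεpos),
    fun lam hlam hineq => ?_⟩
  have hσ0 : esymm n 0 lam = 1 := by simp [esymm]
  set p : ℕ → ℝ := fun i => esymm n i lam / (n.choose i : ℝ) with hp
  have hp0 : p 0 = 1 := by simp [hp, hσ0]
  have hppos : ∀ i ≤ k - 1, 0 < p i := by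
    intro i hi
    rcases Nat.eq_zero_or_pos i with rfl | hipos
    · rw [hp0]; exact one_pos
    · refine div_pos (hlam i hipos hi) ?_
      exact_mod_cast Nat.choose_pos (show i ≤ n by omega)
  have hcard : Multiset.card (Multiset.map lam (Finset.univ.val : Multiset (Fin n))) = n := by
    simp
  have hnewt : ∀ i, i + 2 ≤ k - 1 → p i * p (i + 2) ≤ p (i + 1) ^ 2 := by
    intro i hi
    have hnew := NewtonAux4.newton_ineq (Multiset.map lam (Finset.univ.val : Multiset (Fin n)))
      i (by rw [hcard]; omega)
    rw [hcard, esymm_bridge, esymm_bridge, esymm_bridge] at hnew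
    have hBi : (0 : ℝ) < (n.choose i : ℝ) := by
      exact_mod_cast Nat.choose_pos (show i ≤ n by omega)
    have hBi1 : (0 : ℝ) < (n.choose (i + 1) : ℝ) := by
      exact_mod_cast Nat.choose_pos (show i + 1 ≤ n by omega)
    have hBi2 : (0 : ℝ) < (n.choose (i + 2) : ℝ) := by
      exact_mod_cast Nat.choose_pos (show i + 2 ≤ n by omega)
    rw [hp]
    simp only
    rw [div_mul_div_comm, div_pow, div_le_div_iff₀ (mul_pos hBi hBi2) (pow_pos hBi1 2)]
    nlinarith [hnew]
  have hmac := MacAux.maclaurin_abs p (k - 1) hp0 hppos hnewt l0 (by omega)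
  have hKpos : 0 < p (k - 1) := hppos (k - 1) le_rfl
  have hpl0 : p l0 ≤ C2 * p (k - 1) := by
    have heq : C2 * p (k - 1) = C * esymm n (k - 1) lam / (n.choose l0 : ℝ) := by
      rw [hC2def, hp]
      field_simp
    rw [heq, hp]
    simp only
    gcongr
  have hpow : p l0 ^ (k - 1) ≤ (C2 * p (k - 1)) ^ (k - 1) :=
    pow_le_pow_left₀ (le_of_lt (hppos l0 (by omega))) hpl0 _
  have key : 1 ≤ C2 ^ (k - 1) * p (k - 1) ^ (k - 1 - l0) := by
    have e : p (k - 1) ^ l0 * (C2 ^ (k - 1) * p (k - 1) ^ (k - 1 - l0))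
        = (C2 * p (k - 1)) ^ (k - 1) := by
      have hsplit : l0 + (k - 1 - l0) = k - 1 := by omega
      calc p (k - 1) ^ l0 * (C2 ^ (k - 1) * p (k - 1) ^ (k - 1 - l0))
          = C2 ^ (k - 1) * (p (k - 1) ^ l0 * p (k - 1) ^ (k - 1 - l0)) := by ring
        _ = C2 ^ (k - 1) * p (k - 1) ^ (k - 1) := by rw [← pow_add, hsplit]
        _ = (C2 * p (k - 1)) ^ (k - 1) := (mul_pow _ _ _).symm
    have h1 : p (k - 1) ^ l0 * 1 ≤ p (k - 1) ^ l0 * (C2 ^ (k - 1) * p (k - 1) ^ (k - 1 - l0)) := by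
      rw [mul_one, e]
      exact hmac.trans hpow
    exact le_of_mul_le_mul_left h1 (pow_pos hKpos l0)
  have hεle : ε ≤ p (k - 1) ^ (k - 1 - l0) := by
    rw [hεdef, div_le_iff₀ (pow_pos hC2pos _), mul_comm]
    linarith [key]
  have hfin : min 1 ε ≤ p (k - 1) := by
    rcases le_or_gt 1 (p (k - 1)) with h | h
    · exact le_trans (min_le_left _ _) h
    · refine le_trans (min_le_right _ _) ?_
      have hple : p (k - 1) ^ (k - 1 - l0) ≤ p (k - 1) :=
        pow_le_of_le_one (le_of_lt hKpos) (le_of_lt h) (by omega)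
      linarith [hεle]
  calc (n.choose (k - 1) : ℝ) * min 1 ε
      ≤ (n.choose (k - 1) : ℝ) * p (k - 1) :=
        mul_le_mul_of_nonneg_left hfin (le_of_lt hBK)
    _ = esymm n (k - 1) lam := by
        rw [hp]
        field_simp
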